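/- arXiv:1904.00342 — 2 statements merged into one kernel-verified Lean document; each statement's English description precedes it below -/
import Mathlib

section
/- Let $0<\lambda<1$. If a real sequence $(\alpha_m)_{m\geq 1}$ satisfies $\sum_{m\geq 1} \lambda^{2m}(\alpha_{m+1}-\alpha_m)^2 < \infty$, then $\sum_{m\geq 1} \lambda^{2m}\alpha_m^2 < \infty$, and moreover there is a constant $C$ depending only on $\lambda$ such that $\big(\sum_{m\geq 1}\lambda^{2m}\alpha_m^2\big)^{1/2} \leq C\big(|\alpha_1| + \big(\sum_{m\geq 1}\lambda^{2m}(\alpha_{m+1}-\alpha_m)^2\big)^{1/2}\big).$ -/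
lemma my_sqrt_add_le (a b : ℝ) (ha : 0 ≤ a) (hb : 0 ≤ b) :
    Real.sqrt (a + b) ≤ Real.sqrt a + Real.sqrt b := by
  have h : a + b ≤ (Real.sqrt a + Real.sqrt b) ^ 2 := by
    rw [add_sq, Real.sq_sqrt ha, Real.sq_sqrt hb]
    nlinarith [mul_nonneg (Real.sqrt_nonneg a) (Real.sqrt_nonneg b)]
  calc Real.sqrt (a + b) ≤ Real.sqrt ((Real.sqrt a + Real.sqrt b) ^ 2) :=
        Real.sqrt_le_sqrt h
    _ = _ := Real.sqrt_sq (by positivity)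

lemma my_aux_key (lam x y : ℝ) (h0 : 0 < lam) (h1 : lam < 1) :
    lam ^ 2 * (x + y) ^ 2 ≤
      (1 + lam ^ 2) / 2 * x ^ 2 + lam ^ 2 * (1 + lam ^ 2) / (1 - lam ^ 2) * y ^ 2 := by
  have hl2 : (0:ℝ) < 1 - lam ^ 2 := by nlinarith
  have h : ((1 + lam ^ 2) / 2 * x ^ 2 + lam ^ 2 * (1 + lam ^ 2) / (1 - lam ^ 2) * y ^ 2
      - lam ^ 2 * (x + y) ^ 2) * (1 - lam ^ 2)
      = (1 / 2) * ((1 - lam ^ 2) * x - 2 * lam ^ 2 * y) ^ 2 := by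
    field_simp
    ring
  nlinarith [sq_nonneg ((1 - lam ^ 2) * x - 2 * lam ^ 2 * y), h, hl2]

/-- Lemma 3.4(a), subcritical case `λ < 1`: if the weighted differences of a sequence are
square-summable then so is the weighted sequence itself, with a norm bound depending only
on `λ`. Sequences are 1-indexed: `α (m+1)` represents `α_{m+1}` for `m : ℕ`. -/
theorem stmt_0 (lam : ℝ) (h0 : 0 < lam) (h1 : lam < 1) :
    ∃ C : ℝ, 0 < C ∧ ∀ α : ℕ → ℝ,
      Summable (fun m : ℕ => lam ^ (2 * (m + 1)) * (α (m + 2) - α (m + 1)) ^ 2) →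
      Summable (fun m : ℕ => lam ^ (2 * (m + 1)) * (α (m + 1)) ^ 2) ∧
      Real.sqrt (∑' m : ℕ, lam ^ (2 * (m + 1)) * (α (m + 1)) ^ 2) ≤
        C * (|α 1| +
          Real.sqrt (∑' m : ℕ, lam ^ (2 * (m + 1)) * (α (m + 2) - α (m + 1)) ^ 2)) := by
  have hl2 : (0:ℝ) < 1 - lam ^ 2 := by nlinarith
  set s : ℝ := (1 - lam ^ 2) / 2 with hs
  have hs0 : 0 < s := by positivity
  set c : ℝ := lam ^ 2 * (1 + lam ^ 2) / (1 - lam ^ 2) with hc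
  have hc0 : 0 < c := by positivity
  set μ : ℝ := (1 + lam ^ 2) / 2 with hμ
  set C1 : ℝ := Real.sqrt (lam ^ 2 / s) with hC1
  set C2 : ℝ := Real.sqrt (c / s) with hC2
  have hC1pos : 0 < C1 := Real.sqrt_pos.mpr (by positivity)
  have hC2nn : 0 ≤ C2 := Real.sqrt_nonneg _
  refine ⟨C1 + C2, by linarith, ?_⟩
  intro α hg
  set f : ℕ → ℝ := fun m => lam ^ (2 * (m + 1)) * (α (m + 1)) ^ 2 with hf
  set g : ℕ → ℝ := fun m => lam ^ (2 * (m + 1)) * (α (m + 2) - α (m + 1)) ^ 2 with hgdef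
  have hfnn : ∀ m, 0 ≤ f m := fun m => by simp only [hf]; positivity
  have hgnn : ∀ m, 0 ≤ g m := fun m => by simp only [hgdef]; positivity
  set T : ℝ := ∑' m, g m with hTdef
  have hT : 0 ≤ T := tsum_nonneg hgnn
  -- key recurrence
  have hrec : ∀ m, f (m + 1) ≤ μ * f m + c * g m := by
    intro m
    have hL : (0:ℝ) ≤ lam ^ (2 * (m + 1)) := by positivity
    have key := my_aux_key lam (α (m + 1)) (α (m + 2) - α (m + 1)) h0 h1
    have hsum : α (m + 1) + (α (m + 2) - α (m + 1)) = α (m + 2) := by ring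
    rw [hsum] at key
    have key' : lam ^ 2 * (α (m + 2)) ^ 2
        ≤ μ * (α (m + 1)) ^ 2 + c * (α (m + 2) - α (m + 1)) ^ 2 := by
      rw [hμ, hc]; exact key
    have hfm : f (m + 1) = lam ^ (2 * (m + 1)) * (lam ^ 2 * (α (m + 2)) ^ 2) := by
      simp only [hf]
      rw [show 2 * (m + 1 + 1) = 2 * (m + 1) + 2 from by ring, pow_add]
      ring
    calc f (m + 1) = lam ^ (2 * (m + 1)) * (lam ^ 2 * (α (m + 2)) ^ 2) := hfm
      _ ≤ lam ^ (2 * (m + 1)) *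
          (μ * (α (m + 1)) ^ 2 + c * (α (m + 2) - α (m + 1)) ^ 2) :=
        mul_le_mul_of_nonneg_left key' hL
      _ = μ * f m + c * g m := by simp only [hf, hgdef]; ring
  -- uniform bound on partial sums
  set M : ℝ := (f 0 + c * T) / s with hM
  have hM0 : 0 ≤ M := by
    apply div_nonneg _ hs0.le
    have := hfnn 0
    nlinarith [mul_nonneg hc0.le hT]
  have hbound : ∀ N, ∑ m ∈ Finset.range N, f m ≤ M := by
    intro N
    match N with
    | 0 => simpa using hM0
    | N + 1 =>
      have h1 : ∑ m ∈ Finset.range (N + 1), f m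
          = (∑ m ∈ Finset.range N, f (m + 1)) + f 0 := Finset.sum_range_succ' f N
      have h2 : ∑ m ∈ Finset.range N, f (m + 1)
          ≤ μ * ∑ m ∈ Finset.range N, f m + c * ∑ m ∈ Finset.range N, g m := by
        calc ∑ m ∈ Finset.range N, f (m + 1)
            ≤ ∑ m ∈ Finset.range N, (μ * f m + c * g m) :=
              Finset.sum_le_sum fun m _ => hrec m
          _ = _ := by rw [Finset.sum_add_distrib, ← Finset.mul_sum, ← Finset.mul_sum]
      have h3 : ∑ m ∈ Finset.range N, f m ≤ ∑ m ∈ Finset.range (N + 1), f m :=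
        Finset.sum_le_sum_of_subset_of_nonneg
          (Finset.range_subset_range.mpr (Nat.le_succ N)) (fun i _ _ => hfnn i)
      have h4 : ∑ m ∈ Finset.range N, g m ≤ T :=
        Summable.sum_le_tsum _ (fun i _ => hgnn i) hg
      have hμpos : 0 < μ := by rw [hμ]; positivity
      have hμ1 : 1 - μ = s := by rw [hμ, hs]; ring
      have h5 : c * ∑ m ∈ Finset.range N, g m ≤ c * T :=
        mul_le_mul_of_nonneg_left h4 hc0.le
      have h6 : μ * ∑ m ∈ Finset.range N, f m ≤ μ * ∑ m ∈ Finset.range (N + 1), f m :=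
        mul_le_mul_of_nonneg_left h3 hμpos.le
      have hss : (∑ m ∈ Finset.range (N + 1), f m) * s
          = (∑ m ∈ Finset.range (N + 1), f m) - μ * (∑ m ∈ Finset.range (N + 1), f m) := by
        rw [← hμ1]; ring
      rw [hM, le_div_iff₀ hs0]
      linarith [h1, h2, h5, h6, hss]
  have hSf : Summable f := summable_of_sum_range_le hfnn hbound
  refine ⟨hSf, ?_⟩
  have htsum : ∑' m, f m ≤ M := Summable.tsum_le_of_sum_range_le hSf hbound
  have hMeq : M = lam ^ 2 / s * (α 1) ^ 2 + (c / s) * T := by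
    rw [hM]
    have hf0 : f 0 = lam ^ 2 * (α 1) ^ 2 := by simp [hf]
    rw [hf0]
    field_simp
  have h5 : Real.sqrt (∑' m, f m) ≤ Real.sqrt M := Real.sqrt_le_sqrt htsum
  have h6 : Real.sqrt M ≤ C1 * |α 1| + C2 * Real.sqrt T := by
    rw [hMeq]
    have h7 := my_sqrt_add_le (lam ^ 2 / s * (α 1) ^ 2) ((c / s) * T)
      (by positivity) (by positivity)
    have h8 : Real.sqrt (lam ^ 2 / s * (α 1) ^ 2) = C1 * |α 1| := by
      rw [Real.sqrt_mul (by positivity), Real.sqrt_sq_eq_abs, hC1]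
    have h9 : Real.sqrt ((c / s) * T) = C2 * Real.sqrt T := by
      rw [Real.sqrt_mul (by positivity), hC2]
    rw [h8, h9] at h7
    exact h7
  have hB : 0 ≤ Real.sqrt T := Real.sqrt_nonneg _
  have habs : 0 ≤ |α 1| := abs_nonneg _
  calc Real.sqrt (∑' m, f m) ≤ C1 * |α 1| + C2 * Real.sqrt T := le_trans h5 h6
    _ ≤ (C1 + C2) * (|α 1| + Real.sqrt T) := by
        nlinarith [mul_nonneg hC1pos.le hB, mul_nonneg hC2nn habs]
end

section
/- Let $\lambda = 1$ and consider the sequence spaces $\tilde S = \ell^2$ and $S = \{\alpha : (\alpha_{m+1}-\alpha_m)_{m\geq 1} \in \ell^2\}$ with norm $\|\alpha\|_S = |\alpha_1| + \|(\alpha_{m+1}-\alpha_m)\|_{\ell^2}$. Then $\ell^2 \subseteq S$, $\ell^2$ is dense in $S$, but $\ell^2$ is not closed in $S$ (i.e., there is a sequence in $\ell^2$ converging in the $S$-norm to an element of $S \setminus \ell^2$). -/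
open Filter

/-- The `S`-norm at the critical weight `λ = 1`:
`‖γ‖_S = |γ₁| + ‖(γ_{m+1} - γ_m)‖_{ℓ²}` (0-indexed: `γ 0` is the first entry). -/
noncomputable def Snorm (γ : ℕ → ℝ) : ℝ :=
  |γ 0| + Real.sqrt (∑' m : ℕ, (γ (m + 1) - γ m) ^ 2)

lemma Snorm_nonneg (γ : ℕ → ℝ) : 0 ≤ Snorm γ :=
  add_nonneg (abs_nonneg _) (Real.sqrt_nonneg _)

lemma dense_aux (α : ℕ → ℝ) (hd : Summable (fun m => (α (m + 1) - α m) ^ 2))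
    (ε : ℝ) (hε : 0 < ε) : ∃ β : ℕ → ℝ, Summable (fun m => (β m) ^ 2) ∧
    Snorm (fun m => α m - β m) < ε := by
  set d : ℕ → ℝ := fun m => α (m + 1) - α m with hd_def
  have htail : Tendsto (fun i => ∑' k, d (k + i) ^ 2) atTop (nhds 0) := by
    simpa using tendsto_sum_nat_add (fun m => d m ^ 2)
  have h8 : 0 < ε ^ 2 / 8 := by positivity
  obtain ⟨N, hN1, hN⟩ : ∃ N, 1 ≤ N ∧ ∑' k, d (k + N) ^ 2 < ε ^ 2 / 8 := by
    obtain ⟨N, h1, h2⟩ :=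
      ((htail.eventually (gt_mem_nhds h8)).and (eventually_ge_atTop 1)).exists
    exact ⟨N, h2, h1⟩
  set c : ℝ := α N with hc
  obtain ⟨K, hK⟩ := exists_nat_gt (8 * c ^ 2 / ε ^ 2)
  have hK0 : 0 < (K : ℝ) := lt_of_le_of_lt (by positivity) hK
  have hKnat : 0 < K := by exact_mod_cast hK0
  have hcK : c ^ 2 / K < ε ^ 2 / 8 := by
    rw [div_lt_div_iff₀ hK0 (by norm_num)]
    rw [div_lt_iff₀ (by positivity)] at hK
    nlinarith
  set β : ℕ → ℝ := fun m => if m < N then α m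
    else if m < N + K then c * (1 - ((m : ℝ) - N) / K) else 0 with hβ
  refine ⟨β, ?_, ?_⟩
  · apply summable_of_ne_finset_zero (s := Finset.range (N + K))
    intro m hm
    simp only [Finset.mem_range, not_lt] at hm
    have h1 : ¬ m < N := by omega
    have h2 : ¬ m < N + K := by omega
    simp [hβ, h1, h2]
  · set γ : ℕ → ℝ := fun m => α m - β m with hγ
    have hγ0 : γ 0 = 0 := by
      simp [hγ, hβ, show 0 < N from hN1]
    set u : ℕ → ℝ := fun m => if N ≤ m then d m else 0 with hu
    set v : ℕ → ℝ := fun m => if N ≤ m ∧ m < N + K then c / K else 0 with hv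
    have hδ : ∀ m, γ (m + 1) - γ m = u m + v m := by
      intro m
      have hβm1 : γ (m + 1) - γ m = d m - (β (m + 1) - β m) := by
        simp only [hγ, hd_def]; ring
      rw [hβm1]
      rcases lt_or_ge (m + 1) N with h1 | h1
      · -- m + 1 < N
        have h2 : m < N := by omega
        have hu0 : u m = 0 := by simp [hu]; intro h; omega
        have hv0 : v m = 0 := by simp [hv]; intro h; omega
        simp only [hβ, if_pos h1, if_pos h2, hu0, hv0, hd_def]
        ring
      · rcases lt_or_ge m N with h2 | h2
        · -- m + 1 = N
          have hmN : m + 1 = N := by omega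
          have hu0 : u m = 0 := by simp [hu]; intro h; omega
          have hv0 : v m = 0 := by simp [hv]; intro h; omega
          have e1 : ¬ m + 1 < N := by omega
          have e2 : m + 1 < N + K := by omega
          have ecast : ((m : ℝ) + 1) = (N : ℝ) := by exact_mod_cast congrArg Nat.cast hmN
          simp only [hβ, if_neg e1, if_pos e2, if_pos h2, hu0, hv0, hd_def, Nat.cast_add,
            Nat.cast_one]
          rw [ecast]
          have : α (m + 1) = c := by rw [hc, ← hmN]
          rw [this]
          ring
        · -- N ≤ m
          have hum : u m = d m := by simp [hu, h2]
          have e1 : ¬ m < N := by omega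
          have e1' : ¬ m + 1 < N := by omega
          rcases lt_or_ge (m + 1) (N + K) with h3 | h3
          · -- ramp interior
            have h4 : m < N + K := by omega
            have hvm : v m = c / K := by simp [hv, h2]; omega
            simp only [hβ, if_neg e1, if_neg e1', if_pos h3, if_pos h4, hum, hvm, hd_def,
              Nat.cast_add, Nat.cast_one]
            field_simp
            ring
          · rcases lt_or_ge m (N + K) with h4 | h4
            · -- m + 1 = N + K : last ramp step
              have hm4 : m + 1 = N + K := by omega
              have hvm : v m = c / K := by simp [hv, h2, h4]
              have e3 : ¬ m + 1 < N + K := by omega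
              have ecast : (m : ℝ) = (N : ℝ) + (K : ℝ) - 1 := by
                have : (↑(m + 1) : ℝ) = ↑(N + K) := by exact_mod_cast congrArg Nat.cast hm4
                push_cast at this
                linarith
              simp only [hβ, if_neg e1, if_neg e1', if_neg e3, if_pos h4, hum, hvm, hd_def]
              rw [ecast]
              field_simp
              ring
            · -- both zero
              have e3 : ¬ m + 1 < N + K := by omega
              have e4 : ¬ m < N + K := by omega
              have hvm : v m = 0 := by simp [hv]; intro h; omega
              simp only [hβ, if_neg e1, if_neg e1', if_neg e3, if_neg e4, hum, hvm, hd_def]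
              ring
    -- summability facts
    have hu_sq : Summable (fun m => u m ^ 2) := by
      apply Summable.of_nonneg_of_le (fun m => sq_nonneg _) _ hd
      intro m
      rcases le_or_gt N m with h | h
      · simp [hu, h, hd_def]
      · simp only [hu, if_neg h.not_ge]
        simpa using sq_nonneg (α (m + 1) - α m)
    have hv_sq : Summable (fun m => v m ^ 2) := by
      apply summable_of_ne_finset_zero (s := Finset.range (N + K))
      intro m hm
      simp only [Finset.mem_range, not_lt] at hm
      have : v m = 0 := by simp [hv]; intro h; omega
      simp [this]
    have hRHS : Summable (fun m => 2 * u m ^ 2 + 2 * v m ^ 2) :=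
      (hu_sq.mul_left 2).add (hv_sq.mul_left 2)
    have hle : ∀ m, (γ (m + 1) - γ m) ^ 2 ≤ 2 * u m ^ 2 + 2 * v m ^ 2 := by
      intro m
      rw [hδ m]
      nlinarith [sq_nonneg (u m - v m)]
    have hδ_sq : Summable (fun m => (γ (m + 1) - γ m) ^ 2) :=
      Summable.of_nonneg_of_le (fun m => sq_nonneg _) hle hRHS
    -- compute the tsums
    have hu_tsum : ∑' m, u m ^ 2 < ε ^ 2 / 8 := by
      have h1 := Summable.sum_add_tsum_nat_add (f := fun m => u m ^ 2) N hu_sq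
      have h2 : ∑ i ∈ Finset.range N, u i ^ 2 = 0 := by
        apply Finset.sum_eq_zero
        intro i hi
        simp only [Finset.mem_range] at hi
        have : u i = 0 := by simp [hu]; intro h; omega
        simp [this]
      have h3 : (fun i => u (i + N) ^ 2) = fun i => d (i + N) ^ 2 := by
        funext i
        simp [hu, Nat.le_add_left]
      rw [h2, zero_add, h3] at h1
      rw [← h1]
      exact hN
    have hv_tsum : ∑' m, v m ^ 2 = c ^ 2 / K := by
      rw [tsum_eq_sum (s := Finset.Ico N (N + K)) ?_]
      · have : ∀ m ∈ Finset.Ico N (N + K), v m ^ 2 = (c / K) ^ 2 := by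
          intro m hm
          simp only [Finset.mem_Ico] at hm
          simp [hv, hm.1, hm.2]
        rw [Finset.sum_congr rfl this, Finset.sum_const, Nat.card_Ico]
        simp only [nsmul_eq_mul]
        have : N + K - N = K := by omega
        rw [this]
        field_simp
      · intro m hm
        simp only [Finset.mem_Ico, not_and, not_lt] at hm
        have : v m = 0 := by
          simp only [hv, ite_eq_right_iff]
          rintro ⟨h1, h2⟩
          exact absurd (hm h1) (by omega)
        simp [this]
    have htsum_le : ∑' m, (γ (m + 1) - γ m) ^ 2 < ε ^ 2 := by
      have h1 : ∑' m, (γ (m + 1) - γ m) ^ 2 ≤ ∑' m, (2 * u m ^ 2 + 2 * v m ^ 2) :=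
        Summable.tsum_le_tsum hle hδ_sq hRHS
      have h2 : ∑' m, (2 * u m ^ 2 + 2 * v m ^ 2)
          = 2 * (∑' m, u m ^ 2) + 2 * (∑' m, v m ^ 2) := by
        rw [Summable.tsum_add (hu_sq.mul_left 2) (hv_sq.mul_left 2), tsum_mul_left, tsum_mul_left]
      rw [h2, hv_tsum] at h1
      nlinarith
    have : Snorm γ < ε := by
      rw [Snorm, hγ0, abs_zero, zero_add]
      rw [Real.sqrt_lt' hε]
      exact htsum_le
    exact this

set_option maxHeartbeats 1000000 in
/-- Lemma 3.4(c), critical case `λ = 1`: `ℓ² ⊆ S`, `ℓ²` is dense in `S` for the `S`-norm,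
but `ℓ²` is not closed in `S`: some `α ∈ S \ ℓ²` is an `S`-norm limit of `ℓ²` sequences. -/
theorem stmt_18 :
    (∀ α : ℕ → ℝ, Summable (fun m => (α m) ^ 2) →
      Summable (fun m => (α (m + 1) - α m) ^ 2)) ∧
    (∀ α : ℕ → ℝ, Summable (fun m => (α (m + 1) - α m) ^ 2) →
      ∀ ε > 0, ∃ β : ℕ → ℝ, Summable (fun m => (β m) ^ 2) ∧
        Snorm (fun m => α m - β m) < ε) ∧
    (∃ α : ℕ → ℝ, Summable (fun m => (α (m + 1) - α m) ^ 2) ∧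
      ¬ Summable (fun m => (α m) ^ 2) ∧
      ∃ β : ℕ → ℕ → ℝ, (∀ n, Summable (fun m => (β n m) ^ 2)) ∧
        Filter.Tendsto (fun n => Snorm (fun m => α m - β n m)) Filter.atTop (nhds 0)) := by
  refine ⟨?_, ?_, ?_⟩
  · intro α h
    have h2 : Summable (fun m => (α (m + 1)) ^ 2) :=
      (summable_nat_add_iff 1).2 h
    apply Summable.of_nonneg_of_le (f := fun m => 2 * (α (m + 1)) ^ 2 + 2 * (α m) ^ 2)
      (fun m => sq_nonneg _) ?_ ((h2.mul_left 2).add (h.mul_left 2))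
    intro m
    show (α (m + 1) - α m) ^ 2 ≤ 2 * (α (m + 1)) ^ 2 + 2 * (α m) ^ 2
    nlinarith [sq_nonneg (α (m + 1) + α m)]
  · intro α hd ε hε
    exact dense_aux α hd ε hε
  · refine ⟨fun _ => 1, by simpa using summable_zero, ?_, ?_⟩
    · intro h
      simp only [one_pow] at h
      have h1 := h.tendsto_atTop_zero
      have h2 : Tendsto (fun _ : ℕ => (1 : ℝ)) atTop (nhds 1) := tendsto_const_nhds
      have := tendsto_nhds_unique h1 h2
      norm_num at this
    · have hsel : ∀ n : ℕ, ∃ β : ℕ → ℝ, Summable (fun m => (β m) ^ 2) ∧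
          Snorm (fun m => (1 : ℝ) - β m) < 1 / (n + 1) := by
        intro n
        exact dense_aux (fun _ => 1) (by simpa using summable_zero) (1 / (n + 1))
          (by positivity)
      choose β hβ1 hβ2 using hsel
      refine ⟨β, hβ1, ?_⟩
      apply squeeze_zero (fun n => Snorm_nonneg _) (fun n => (hβ2 n).le)
      exact tendsto_one_div_add_atTop_nhds_zero_nat
end
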